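/- With the notation and assumptions of the stationary measure π_ρ (q > 1, ν = q^{-I}, ρ ∈ (0,I), χ the unique negative solution of ∑_{i=1}^I χ/(χ - q^i) = ρ), the mean of π_ρ equals ρ and the variance of π_ρ equals ρ - ∑_{i=1}^I χ²/(q^i - χ)². -/

import Mathlib

open Finset

/-- The single-site stationary weight
`π_ρ(i) = ((χ;q)_∞/(χν;q)_∞) ((ν;q)_i/(q;q)_i) χ^i`, where for `ν = q^{-I}` the
normalizing ratio `(χ;q)_∞/(χν;q)_∞` equals the finite product
`(∏_{k=0}^{I-1} (1 - ν q^k χ))⁻¹`. -/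
noncomputable def statPi (q χ : ℝ) (I : ℕ) (i : ℕ) : ℝ :=
  (∏ k ∈ Finset.range I, (1 - q ^ (-(I : ℤ)) * q ^ k * χ))⁻¹ *
    ((∏ k ∈ Finset.range i, (1 - q ^ (-(I : ℤ)) * q ^ k)) /
      (∏ k ∈ Finset.range i, (1 - q * q ^ k))) * χ ^ i

noncomputable def bcoef (q : ℝ) (I i : ℕ) : ℝ :=
  (∏ k ∈ range i, (1 - q ^ (-(I:ℤ)) * q ^ k)) / (∏ k ∈ range i, (1 - q * q ^ k))

noncomputable def dd (q χ : ℝ) (I k : ℕ) : ℝ := q ^ (-(I:ℤ)) * q ^ k * χ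

noncomputable def ZZ (q χ : ℝ) (I : ℕ) : ℝ := ∏ k ∈ range I, (1 - dd q χ I k)

noncomputable def rr (q χ : ℝ) (I k : ℕ) : ℝ := -(dd q χ I k) / (1 - dd q χ I k)

lemma qden_ne {q : ℝ} (hq : 1 < q) (i : ℕ) : (∏ k ∈ range i, (1 - q * q ^ k)) ≠ 0 := by
  apply prod_ne_zero_iff.2
  intro k _
  have h1 : (1:ℝ) ≤ q ^ k := one_le_pow₀ hq.le
  nlinarith

lemma zpow_neg_succ_mul {q : ℝ} (hq : 1 < q) (I : ℕ) :
    q ^ (-((I:ℕ)+1:ℕ):ℤ) * q = q ^ (-(I:ℤ)) := by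
  have hq0 : q ≠ 0 := by positivity
  rw [← zpow_add_one₀ hq0]
  congr 1
  push_cast
  ring

lemma bcoef_succ {q : ℝ} (hq : 1 < q) (I i : ℕ) :
    bcoef q (I+1) (i+1) = bcoef q I (i+1) - q ^ (-((I:ℕ)+1:ℕ):ℤ) * bcoef q I i := by
  have hq0 : q ≠ 0 := by positivity
  have hc : q ^ (-((I:ℕ)+1:ℕ):ℤ) = q ^ (-(I:ℤ)) / q := by
    field_simp [← zpow_neg_succ_mul hq I]
    exact zpow_neg_succ_mul hq I
  have hfac : ∀ k, 1 - q ^ (-((I:ℕ)+1:ℕ):ℤ) * q ^ (k+1) = 1 - q ^ (-(I:ℤ)) * q ^ k := by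
    intro k
    rw [pow_succ']
    rw [show q ^ (-((I:ℕ)+1:ℕ):ℤ) * (q * q ^ k) = (q ^ (-((I:ℕ)+1:ℕ):ℤ) * q) * q ^ k by ring,
      zpow_neg_succ_mul hq I]
  unfold bcoef
  rw [prod_range_succ' (fun k => (1 - q ^ (-((I:ℕ)+1:ℕ):ℤ) * q ^ k)) i]
  simp only [hfac, pow_zero, mul_one]
  rw [prod_range_succ (fun k => (1 - q ^ (-(I:ℤ)) * q ^ k)) i,
    prod_range_succ (fun k => (1 - q * q ^ k)) i]
  have hD := qden_ne hq i
  have hDi : (1 : ℝ) - q * q ^ i ≠ 0 := by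
    have h1 : (1:ℝ) ≤ q ^ i := one_le_pow₀ hq.le
    nlinarith
  rw [hc]
  field_simp
  ring

lemma bcoef_zero (q : ℝ) (I : ℕ) : bcoef q I 0 = 1 := by simp [bcoef]

lemma bcoef_top {q : ℝ} (hq : 1 < q) (I : ℕ) : bcoef q I (I+1) = 0 := by
  have hq0 : q ≠ 0 := by positivity
  unfold bcoef
  rw [Finset.prod_eq_zero (self_mem_range_succ I)]
  · simp
  · rw [← zpow_natCast q I, ← zpow_add₀ hq0]
    simp

lemma qbinom {q : ℝ} (hq : 1 < q) (I : ℕ) (t : ℝ) :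
    ∑ i ∈ range (I+1), bcoef q I i * t ^ i
      = ∏ k ∈ range I, (1 - q ^ (-(I:ℤ)) * q ^ k * t) := by
  induction I with
  | zero => simp [bcoef]
  | succ I ih =>
    have hfac : ∀ k, 1 - q ^ (-((I:ℕ)+1:ℕ):ℤ) * q ^ (k+1) * t
        = 1 - q ^ (-(I:ℤ)) * q ^ k * t := by
      intro k
      rw [pow_succ']
      rw [show q ^ (-((I:ℕ)+1:ℕ):ℤ) * (q * q ^ k) * t
          = (q ^ (-((I:ℕ)+1:ℕ):ℤ) * q) * q ^ k * t by ring, zpow_neg_succ_mul hq I]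
    have h2 : ∑ i ∈ range (I+1), bcoef q I (i+1) * t^(i+1) + 1
        = ∑ i ∈ range (I+1), bcoef q I i * t^i := by
      have ha := sum_range_succ' (fun i => bcoef q I i * t^i) (I+1)
      have hb := sum_range_succ (fun i => bcoef q I i * t^i) (I+1)
      simp only [bcoef_top hq, bcoef_zero, pow_zero, mul_one, zero_mul, add_zero] at ha hb
      linarith [ha, hb]
    have hRHS : ∏ k ∈ range (I+1), (1 - q ^ (-((I:ℕ)+1:ℕ):ℤ) * q ^ k * t)
        = (∏ k ∈ range I, (1 - q ^ (-(I:ℤ)) * q ^ k * t))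
          * (1 - q ^ (-((I:ℕ)+1:ℕ):ℤ) * t) := by
      rw [prod_range_succ' (fun k => (1 - q ^ (-((I:ℕ)+1:ℕ):ℤ) * q ^ k * t)) I]
      simp only [hfac, pow_zero, mul_one]
    rw [hRHS, ← ih]
    rw [sum_range_succ' (fun i => bcoef q (I+1) i * t^i) (I+1)]
    simp only [bcoef_succ hq, bcoef_zero, pow_zero, mul_one]
    have h3 : ∑ i ∈ range (I+1),
        (bcoef q I (i+1) - q ^ (-((I:ℕ)+1:ℕ):ℤ) * bcoef q I i) * t ^ (i+1)
        = ∑ i ∈ range (I+1), bcoef q I (i+1) * t^(i+1)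
          - (q ^ (-((I:ℕ)+1:ℕ):ℤ) * t) * ∑ i ∈ range (I+1), bcoef q I i * t^i := by
      rw [mul_sum, ← sum_sub_distrib]
      apply sum_congr rfl
      intro i _
      ring
    rw [h3]
    nlinarith [h2]

lemma dd_neg {q χ : ℝ} (hq : 1 < q) (hχ : χ < 0) (I k : ℕ) : dd q χ I k < 0 := by
  have hq0 : (0:ℝ) < q := lt_trans one_pos hq
  have h1 : (0:ℝ) < q ^ (-(I:ℤ)) * q ^ k := by positivity
  exact mul_neg_of_pos_of_neg h1 hχ

lemma one_sub_dd_pos {q χ : ℝ} (hq : 1 < q) (hχ : χ < 0) (I k : ℕ) : 0 < 1 - dd q χ I k := by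
  nlinarith [dd_neg hq hχ I k]

lemma ZZ_pos {q χ : ℝ} (hq : 1 < q) (hχ : χ < 0) (I : ℕ) : 0 < ZZ q χ I :=
  prod_pos fun k _ => one_sub_dd_pos hq hχ I k

lemma statPi_eq (q χ : ℝ) (I i : ℕ) :
    statPi q χ I i = (ZZ q χ I)⁻¹ * bcoef q I i * χ ^ i := rfl

lemma key_gf {q χ : ℝ} (hq : 1 < q) (I : ℕ) (z : ℝ) :
    (∑ i ∈ range (I+1), statPi q χ I i * z ^ i)
      = (ZZ q χ I)⁻¹ * ∏ k ∈ range I, (1 - dd q χ I k * z) := by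
  have h := qbinom hq I (χ * z)
  calc ∑ i ∈ range (I+1), statPi q χ I i * z ^ i
      = (ZZ q χ I)⁻¹ * ∑ i ∈ range (I+1), bcoef q I i * (χ * z) ^ i := by
        rw [mul_sum]
        refine sum_congr rfl fun i _ => ?_
        rw [statPi_eq, mul_pow]
        ring
    _ = (ZZ q χ I)⁻¹ * ∏ k ∈ range I, (1 - dd q χ I k * z) := by
        rw [h]
        congr 1
        refine prod_congr rfl fun k _ => ?_
        simp only [dd]
        ring

lemma moments {q χ : ℝ} (hq : 1 < q) (hχ : χ < 0) (I : ℕ) :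
    (∑ i ∈ range (I+1), statPi q χ I i = 1)
    ∧ (∑ i ∈ range (I+1), (i:ℝ) * statPi q χ I i = ∑ k ∈ range I, rr q χ I k)
    ∧ (∑ i ∈ range (I+1), (i:ℝ) * ((i-1:ℕ):ℝ) * statPi q χ I i
        = (∑ k ∈ range I, rr q χ I k)^2 - ∑ k ∈ range I, (rr q χ I k)^2) := by
  classical
  have hZ := ZZ_pos hq hχ I
  have hZ0 : ZZ q χ I ≠ 0 := ne_of_gt hZ
  have hone : ∀ k, (1 : ℝ) - dd q χ I k ≠ 0 := fun k => ne_of_gt (one_sub_dd_pos hq hχ I k)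
  -- erase identities
  have herase : ∀ k ∈ range I,
      (ZZ q χ I)⁻¹ * ∏ j ∈ (range I).erase k, (1 - dd q χ I j) = (1 - dd q χ I k)⁻¹ := by
    intro k hk
    have h := Finset.mul_prod_erase (range I) (fun k => 1 - dd q χ I k) hk
    have hP : (∏ j ∈ (range I).erase k, (1 - dd q χ I j)) ≠ 0 := by
      exact prod_ne_zero_iff.2 fun j _ => hone j
    have hZe : ZZ q χ I = (1 - dd q χ I k) * ∏ j ∈ (range I).erase k, (1 - dd q χ I j) := by
      rw [h]; rfl
    rw [hZe]
    field_simp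
  have herase2 : ∀ k ∈ range I, ∀ j ∈ (range I).erase k,
      (ZZ q χ I)⁻¹ * ∏ l ∈ ((range I).erase k).erase j, (1 - dd q χ I l)
        = ((1 - dd q χ I k) * (1 - dd q χ I j))⁻¹ := by
    intro k hk j hj
    have h1 := Finset.mul_prod_erase ((range I).erase k) (fun k => 1 - dd q χ I k) hj
    have h2 := Finset.mul_prod_erase (range I) (fun k => 1 - dd q χ I k) hk
    have hP : (∏ l ∈ ((range I).erase k).erase j, (1 - dd q χ I l)) ≠ 0 :=
      prod_ne_zero_iff.2 fun l _ => hone l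
    have hZe : ZZ q χ I = (1 - dd q χ I k) *
        ((1 - dd q χ I j) * ∏ l ∈ ((range I).erase k).erase j, (1 - dd q χ I l)) := by
      rw [h1, h2]; rfl
    rw [hZe]
    field_simp
  -- derivatives
  have hf : ∀ z : ℝ, HasDerivAt (fun z : ℝ => ∑ i ∈ range (I+1), statPi q χ I i * z ^ i)
      (∑ i ∈ range (I+1), statPi q χ I i * ((i:ℝ) * z ^ (i-1))) z :=
    fun z => HasDerivAt.fun_sum fun i _ => (hasDerivAt_pow i z).const_mul _
  have hg : ∀ z : ℝ, HasDerivAt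
      (fun z : ℝ => (ZZ q χ I)⁻¹ * ∏ k ∈ range I, (1 - dd q χ I k * z))
      ((ZZ q χ I)⁻¹ * ∑ k ∈ range I,
        (∏ j ∈ (range I).erase k, (1 - dd q χ I j * z)) * (-(dd q χ I k))) z := by
    intro z
    apply HasDerivAt.const_mul
    have h : ∀ k ∈ range I, HasDerivAt (fun z : ℝ => 1 - dd q χ I k * z) (-(dd q χ I k)) z :=
      fun k _ => by simpa using ((hasDerivAt_id z).const_mul (dd q χ I k)).const_sub 1
    simpa [smul_eq_mul, mul_comm] using HasDerivAt.fun_finsetProd h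
  have hfg : (fun z : ℝ => ∑ i ∈ range (I+1), statPi q χ I i * z ^ i)
      = fun z : ℝ => (ZZ q χ I)⁻¹ * ∏ k ∈ range I, (1 - dd q χ I k * z) :=
    funext (key_gf hq I)
  have hd1 : ∀ z : ℝ, (∑ i ∈ range (I+1), statPi q χ I i * ((i:ℝ) * z ^ (i-1)))
      = (ZZ q χ I)⁻¹ * ∑ k ∈ range I,
        (∏ j ∈ (range I).erase k, (1 - dd q χ I j * z)) * (-(dd q χ I k)) := by
    intro z
    exact (hf z).unique (hfg ▸ hg z)
  have hf1 : ∀ z : ℝ, HasDerivAt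
      (fun z : ℝ => ∑ i ∈ range (I+1), statPi q χ I i * ((i:ℝ) * z ^ (i-1)))
      (∑ i ∈ range (I+1), statPi q χ I i * ((i:ℝ) * (((i-1:ℕ):ℝ) * z ^ (i-1-1)))) z :=
    fun z => HasDerivAt.fun_sum fun i _ => ((hasDerivAt_pow (i-1) z).const_mul ((i:ℝ))).const_mul _
  have hg1 : ∀ z : ℝ, HasDerivAt
      (fun z : ℝ => (ZZ q χ I)⁻¹ * ∑ k ∈ range I,
        (∏ j ∈ (range I).erase k, (1 - dd q χ I j * z)) * (-(dd q χ I k)))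
      ((ZZ q χ I)⁻¹ * ∑ k ∈ range I, (∑ j ∈ (range I).erase k,
          (∏ l ∈ ((range I).erase k).erase j, (1 - dd q χ I l * z)) * (-(dd q χ I j)))
        * (-(dd q χ I k))) z := by
    intro z
    apply HasDerivAt.const_mul
    apply HasDerivAt.fun_sum
    intro k _
    apply HasDerivAt.mul_const
    have h : ∀ j ∈ (range I).erase k,
        HasDerivAt (fun z : ℝ => 1 - dd q χ I j * z) (-(dd q χ I j)) z :=
      fun j _ => by simpa using ((hasDerivAt_id z).const_mul (dd q χ I j)).const_sub 1
    simpa [smul_eq_mul, mul_comm] using HasDerivAt.fun_finsetProd h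
  have hd2 : (∑ i ∈ range (I+1), statPi q χ I i * ((i:ℝ) * (((i-1:ℕ):ℝ) * (1:ℝ) ^ (i-1-1))))
      = (ZZ q χ I)⁻¹ * ∑ k ∈ range I, (∑ j ∈ (range I).erase k,
          (∏ l ∈ ((range I).erase k).erase j, (1 - dd q χ I l * 1)) * (-(dd q χ I j)))
        * (-(dd q χ I k)) := by
    exact (hf1 1).unique ((funext hd1) ▸ hg1 1)
  -- total mass
  refine ⟨?_, ?_, ?_⟩
  · have h := key_gf hq (χ := χ) I 1
    simp only [one_pow, mul_one] at h
    rw [h]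
    exact inv_mul_cancel₀ hZ0
  · have h := hd1 1
    simp only [one_pow, mul_one] at h
    calc ∑ i ∈ range (I+1), (i:ℝ) * statPi q χ I i
        = ∑ i ∈ range (I+1), statPi q χ I i * (i:ℝ) := by
          exact sum_congr rfl fun i _ => by ring
      _ = (ZZ q χ I)⁻¹ * ∑ k ∈ range I,
            (∏ j ∈ (range I).erase k, (1 - dd q χ I j)) * (-(dd q χ I k)) := h
      _ = ∑ k ∈ range I, rr q χ I k := by
          rw [mul_sum]
          refine sum_congr rfl fun k hk => ?_
          rw [show (ZZ q χ I)⁻¹ * ((∏ j ∈ (range I).erase k, (1 - dd q χ I j)) * (-(dd q χ I k)))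
              = ((ZZ q χ I)⁻¹ * ∏ j ∈ (range I).erase k, (1 - dd q χ I j)) * (-(dd q χ I k)) by ring,
            herase k hk, rr, div_eq_mul_inv, mul_comm]
  · have h := hd2
    simp only [one_pow, mul_one] at h
    have hS : ∀ k ∈ range I, ∑ j ∈ (range I).erase k, rr q χ I j
        = (∑ j ∈ range I, rr q χ I j) - rr q χ I k :=
      fun k hk => Finset.sum_erase_eq_sub hk
    calc ∑ i ∈ range (I+1), (i:ℝ) * ((i-1:ℕ):ℝ) * statPi q χ I i
        = ∑ i ∈ range (I+1), statPi q χ I i * ((i:ℝ) * ((i-1:ℕ):ℝ)) := by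
          exact sum_congr rfl fun i _ => by ring
      _ = (ZZ q χ I)⁻¹ * ∑ k ∈ range I, (∑ j ∈ (range I).erase k,
            (∏ l ∈ ((range I).erase k).erase j, (1 - dd q χ I l)) * (-(dd q χ I j)))
          * (-(dd q χ I k)) := h
      _ = ∑ k ∈ range I, (∑ j ∈ (range I).erase k, rr q χ I j * rr q χ I k) := by
          rw [mul_sum]
          refine sum_congr rfl fun k hk => ?_
          rw [show (ZZ q χ I)⁻¹ * ((∑ j ∈ (range I).erase k,
              (∏ l ∈ ((range I).erase k).erase j, (1 - dd q χ I l)) * (-(dd q χ I j))) * (-(dd q χ I k)))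
              = ((ZZ q χ I)⁻¹ * ∑ j ∈ (range I).erase k,
              (∏ l ∈ ((range I).erase k).erase j, (1 - dd q χ I l)) * (-(dd q χ I j))) * (-(dd q χ I k)) by ring,
            mul_sum, sum_mul]
          refine sum_congr rfl fun j hj => ?_
          rw [show (ZZ q χ I)⁻¹ * ((∏ l ∈ ((range I).erase k).erase j, (1 - dd q χ I l)) * (-(dd q χ I j)))
              = ((ZZ q χ I)⁻¹ * ∏ l ∈ ((range I).erase k).erase j, (1 - dd q χ I l)) * (-(dd q χ I j)) by ring,
            herase2 k hk j hj]
          rw [rr, rr, mul_inv]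
          field_simp
      _ = ∑ k ∈ range I, ((∑ j ∈ range I, rr q χ I j) - rr q χ I k) * rr q χ I k := by
          refine sum_congr rfl fun k hk => ?_
          rw [← sum_mul, hS k hk]
      _ = (∑ k ∈ range I, rr q χ I k)^2 - ∑ k ∈ range I, (rr q χ I k)^2 := by
          simp only [sub_mul]
          rw [sum_sub_distrib, ← mul_sum, sq]
          congr 1
          exact sum_congr rfl fun k _ => by rw [sq]


lemma rr_eq {q χ : ℝ} (hq : 1 < q) (hχ : χ < 0) (I : ℕ) :
    ∀ k ∈ range I, rr q χ I k = χ / (χ - q ^ (I - k)) := by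
  intro k hk
  have hq0 : (0:ℝ) < q := lt_trans one_pos hq
  have hqne : q ≠ 0 := ne_of_gt hq0
  have hone : (1:ℝ) - dd q χ I k ≠ 0 := ne_of_gt (one_sub_dd_pos hq hχ I k)
  have hden : χ - q ^ (I - k) ≠ 0 := by
    have : (0:ℝ) < q ^ (I - k) := by positivity
    nlinarith
  have hpow : q ^ (-(I:ℤ)) * q ^ k * q ^ (I - k) = 1 := by
    rw [mul_assoc, ← pow_add, show k + (I - k) = I from by
      simp only [mem_range] at hk; omega,
      ← zpow_natCast q I, ← zpow_add₀ hqne]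
    simp
  rw [rr, div_eq_div_iff hone hden, dd]
  linear_combination χ * hpow

lemma reindexF (F : ℕ → ℝ) (I : ℕ) : ∑ k ∈ range I, F (I - k) = ∑ i ∈ Icc 1 I, F i := by
  rw [← Finset.Ico_add_one_right_eq_Icc, Finset.sum_Ico_eq_sum_range]
  rw [show I + 1 - 1 = I from rfl]
  rw [← sum_range_reflect (fun j => F (1 + j)) I]
  apply sum_congr rfl
  intro j hj
  simp only [mem_range] at hj
  congr 1
  omega

/-- **Mean and variance of the stationary measure π_ρ** (Lemma B.2 of the paper).
With `q > 1`, `ν = q^{-I}`, `ρ ∈ (0, I)` and `χ < 0` the unique negative solution of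
`∑_{i=1}^{I} χ/(χ - qⁱ) = ρ`, the measure `π_ρ` has mean `ρ` and variance
`ρ - ∑_{i=1}^{I} χ²/(qⁱ - χ)²`. -/
theorem statPi_mean_variance (I : ℕ) (hI : 1 ≤ I) (q ρ χ : ℝ) (hq : 1 < q)
    (hρ0 : 0 < ρ) (hρI : ρ < I) (hχ : χ < 0)
    (hχeq : ∑ i ∈ Finset.Icc 1 I, χ / (χ - q ^ i) = ρ) :
    (∑ i ∈ Finset.range (I + 1), (i : ℝ) * statPi q χ I i = ρ) ∧
      ∑ i ∈ Finset.range (I + 1), ((i : ℝ) - ρ) ^ 2 * statPi q χ I i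
        = ρ - ∑ i ∈ Finset.Icc 1 I, χ ^ 2 / (q ^ i - χ) ^ 2 := by
  obtain ⟨hmass, hmean, hsec⟩ := moments hq hχ I
  have hrr := rr_eq hq hχ I
  have hS : ∑ k ∈ range I, rr q χ I k = ρ := by
    rw [sum_congr rfl hrr, reindexF (fun i => χ / (χ - q ^ i)) I, hχeq]
  have hS2 : ∑ k ∈ range I, (rr q χ I k) ^ 2
      = ∑ i ∈ Icc 1 I, χ ^ 2 / (q ^ i - χ) ^ 2 := by
    have h2 : ∀ k ∈ range I, (rr q χ I k) ^ 2 = χ ^ 2 / (q ^ (I - k) - χ) ^ 2 := by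
      intro k hk
      rw [hrr k hk, div_pow, show (χ - q ^ (I - k)) ^ 2 = (q ^ (I - k) - χ) ^ 2 from by ring]
    rw [sum_congr rfl h2, reindexF (fun i => χ ^ 2 / (q ^ i - χ) ^ 2) I]
  have hmean' : ∑ i ∈ Finset.range (I + 1), (i : ℝ) * statPi q χ I i = ρ := by
    rw [hmean, hS]
  refine ⟨hmean', ?_⟩
  have hterm : ∀ i : ℕ, ((i:ℝ) - ρ) ^ 2
      = (i:ℝ) * ((i - 1 : ℕ) : ℝ) + (1 - 2*ρ) * (i:ℝ) + ρ ^ 2 := by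
    intro i
    cases i with
    | zero => simp
    | succ n => push_cast [Nat.succ_sub_one]; ring
  calc ∑ i ∈ Finset.range (I + 1), ((i : ℝ) - ρ) ^ 2 * statPi q χ I i
      = ∑ i ∈ Finset.range (I + 1), ((i:ℝ) * ((i - 1 : ℕ) : ℝ) * statPi q χ I i
          + ((1 - 2*ρ) * ((i:ℝ) * statPi q χ I i) + ρ ^ 2 * statPi q χ I i)) := by
        refine sum_congr rfl fun i _ => ?_
        rw [hterm i]
        ring
    _ = (∑ i ∈ Finset.range (I + 1), (i:ℝ) * ((i - 1 : ℕ) : ℝ) * statPi q χ I i)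
        + ((1 - 2*ρ) * ∑ i ∈ Finset.range (I + 1), (i:ℝ) * statPi q χ I i
          + ρ ^ 2 * ∑ i ∈ Finset.range (I + 1), statPi q χ I i) := by
        rw [sum_add_distrib, sum_add_distrib, mul_sum, mul_sum]
    _ = ((∑ k ∈ range I, rr q χ I k) ^ 2 - ∑ k ∈ range I, (rr q χ I k) ^ 2)
        + ((1 - 2*ρ) * ρ + ρ ^ 2 * 1) := by
        rw [hsec, hmean', hmass]
    _ = ρ - ∑ i ∈ Finset.Icc 1 I, χ ^ 2 / (q ^ i - χ) ^ 2 := by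
        rw [hS, hS2]
        ring
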